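/- With notation as in Theorem 1 (α = Σ_{i∈I} α_i, α_i = rk(Γ) - a_i - 1, |I| = N-d, ∩_{i∈I} H_i = {0}, a_J = rk Stab_Γ(∩_{j∈J} H_j)), the inequality a_J + a_{J'} - a_{J∪J'} ≤ rk(Γ) iterated over I yields Σ_{i∈I} a_i ≤ (N-d-1)·rk(Γ) + a_I with a_I = 0, and therefore α ≥ d + rk(Γ) - N. -/

import Mathlib

open Module

private lemma key_sub {Γ : Type*} [AddCommGroup Γ] [Module.Free ℤ Γ] [Module.Finite ℤ Γ]
    (s t : Submodule ℤ Γ) :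
    finrank ℤ s + finrank ℤ t ≤ finrank ℤ Γ + finrank ℤ ↥(s ⊓ t) := by
  have h := Submodule.rank_sup_add_rank_inf_eq s t
  have h2 : Module.rank ℤ ↥(s ⊔ t) ≤ Module.rank ℤ Γ := Submodule.rank_le _
  have h3 : ((finrank ℤ s + finrank ℤ t : ℕ) : Cardinal) ≤
      ((finrank ℤ Γ + finrank ℤ ↥(s ⊓ t) : ℕ) : Cardinal) := by
    push_cast
    rw [finrank_eq_rank, finrank_eq_rank, finrank_eq_rank, finrank_eq_rank, ← h]
    exact add_le_add_left h2 _
  exact_mod_cast h3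

private lemma key_add {Γ : Type*} [AddCommGroup Γ] [Module.Free ℤ Γ] [Module.Finite ℤ Γ]
    (s t : AddSubgroup Γ) :
    finrank ℤ s + finrank ℤ t ≤ finrank ℤ Γ + finrank ℤ ↥(s ⊓ t) :=
  key_sub (AddSubgroup.toIntSubmodule s) (AddSubgroup.toIntSubmodule t)

private lemma finrank_top_addSubgroup {Γ : Type*} [AddCommGroup Γ] :
    finrank ℤ ↥(⊤ : AddSubgroup Γ) = finrank ℤ Γ := by
  have : AddSubgroup.toIntSubmodule (⊤ : AddSubgroup Γ) = ⊤ := by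
    ext x; simp
  show finrank ℤ ↥(AddSubgroup.toIntSubmodule (⊤ : AddSubgroup Γ)) = finrank ℤ Γ
  rw [this, finrank_top]

private lemma iter_lemma {Γ : Type*} [AddCommGroup Γ] [Module.Free ℤ Γ] [Module.Finite ℤ Γ]
    {m : ℕ} (G : Fin m → AddSubgroup Γ) (s : Finset (Fin m)) :
    (∑ i ∈ s, (finrank ℤ ↥(G i) : ℤ)) + (finrank ℤ Γ : ℤ) ≤
      (s.card : ℤ) * (finrank ℤ Γ : ℤ) + (finrank ℤ ↥(⨅ i ∈ s, G i) : ℤ) := by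
  classical
  induction s using Finset.induction_on with
  | empty =>
    have htop : (⨅ i ∈ (∅ : Finset (Fin m)), G i) = ⊤ := by simp
    rw [htop]
    simp [finrank_top_addSubgroup]
  | @insert a s ha ih =>
    rw [Finset.sum_insert ha, Finset.card_insert_of_notMem ha]
    have hinf : (⨅ i ∈ insert a s, G i) = G a ⊓ ⨅ i ∈ s, G i :=
      Finset.iInf_insert a s G
    rw [hinf]
    have hk := key_add (G a) (⨅ i ∈ s, G i)
    have hk' : (finrank ℤ ↥(G a) : ℤ) + (finrank ℤ ↥(⨅ i ∈ s, G i) : ℤ) ≤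
        (finrank ℤ Γ : ℤ) + (finrank ℤ ↥(G a ⊓ ⨅ i ∈ s, G i) : ℤ) := by exact_mod_cast hk
    push_cast
    linarith

/-- Iterating the subadditivity `a_J + a_{J'} ≤ rk(Γ) + a_{J∪J'}` of stabilizer ranks
over a transverse family `I` of `N-d` hyperplanes with `a_I = 0` yields
`Σ_{i∈I} a_i ≤ (N-d-1)·rk(Γ)`, whence `α = Σ_{i∈I}(rk(Γ) - a_i - 1) ≥ d + rk(Γ) - N`. -/
theorem stmt19 (N d : ℕ) (hdN : d < N)
    (Γ : Type*) [AddCommGroup Γ] [Module.Free ℤ Γ] [Module.Finite ℤ Γ]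
    (m : ℕ) (G : Fin m → AddSubgroup Γ)
    (I : Finset (Fin m)) (hIcard : I.card = N - d)
    (hAI : Module.finrank ℤ ↥(⨅ i ∈ I, G i) = 0) :
    (∑ i ∈ I, (Module.finrank ℤ ↥(G i) : ℤ)) ≤
      ((N : ℤ) - d - 1) * (Module.finrank ℤ Γ : ℤ) ∧
    (∑ i ∈ I, ((Module.finrank ℤ Γ : ℤ) - (Module.finrank ℤ ↥(G i) : ℤ) - 1)) ≥
      (d : ℤ) + (Module.finrank ℤ Γ : ℤ) - N := by
  have h := iter_lemma G I
  rw [hIcard, hAI] at h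
  have hcast : ((N - d : ℕ) : ℤ) = (N : ℤ) - d := by
    rw [Nat.cast_sub hdN.le]
  rw [hcast] at h
  push_cast at h
  have hexp : ((N : ℤ) - d - 1) * (finrank ℤ Γ : ℤ) =
      ((N : ℤ) - d) * (finrank ℤ Γ : ℤ) - (finrank ℤ Γ : ℤ) := by ring
  constructor
  · linarith
  · have hsum : (∑ i ∈ I, ((finrank ℤ Γ : ℤ) - (finrank ℤ ↥(G i) : ℤ) - 1)) =
        (I.card : ℤ) * (finrank ℤ Γ : ℤ) - (∑ i ∈ I, (finrank ℤ ↥(G i) : ℤ)) - I.card := by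
      rw [Finset.sum_sub_distrib, Finset.sum_sub_distrib, Finset.sum_const, Finset.sum_const]
      ring
    rw [hsum, hIcard, hcast]
    linarith
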